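/- Combining the margin-perturbation bound with the constraint parameterization: if V*(·; c) denotes the fixed point of the safety Bellman backup with margin ℓ(z;c) = −‖g(z)−g(c)‖, then ‖V*(·;c₁) − V*(·;c₂)‖_∞ ≤ ‖g(c₁) − g(c₂)‖ for any constraint encodings c₁, c₂. -/

import Mathlib

open MeasureTheory

lemma abs_min_sub_min' (a b c d : ℝ) :
    |min a b - min c d| ≤ max |a - c| |b - d| := by
  rw [abs_sub_le_iff]
  constructor
  · rcases le_total c d with h | h
    · have h1 : min a b - min c d ≤ a - c := by
        rw [min_eq_left h]; linarith [min_le_left a b]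
      have h2 : a - c ≤ |a - c| := le_abs_self _
      linarith [le_max_left |a - c| |b - d|]
    · have h1 : min a b - min c d ≤ b - d := by
        rw [min_eq_right h]; linarith [min_le_right a b]
      have h2 : b - d ≤ |b - d| := le_abs_self _
      linarith [le_max_right |a - c| |b - d|]
  · rcases le_total a b with h | h
    · have h1 : min c d - min a b ≤ c - a := by
        rw [min_eq_left h]; linarith [min_le_left c d]
      have h2 : c - a ≤ |a - c| := by rw [abs_sub_comm]; exact le_abs_self _
      linarith [le_max_left |a - c| |b - d|]
    · have h1 : min c d - min a b ≤ d - b := by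
        rw [min_eq_right h]; linarith [min_le_right c d]
      have h2 : d - b ≤ |b - d| := by rw [abs_sub_comm]; exact le_abs_self _
      linarith [le_max_right |a - c| |b - d|]

/-- Constraint sensitivity of the parameterized safety value: if `V*(·;c)` is the
bounded fixed point of the safety Bellman backup with margin `ℓ(z;c) = -‖g(z)-g(c)‖`,
then `‖V*(·;c₁) - V*(·;c₂)‖_∞ ≤ ‖g(c₁) - g(c₂)‖`. -/
theorem constraint_parameterized_value_lipschitz
    {Z A : Type*} [MeasurableSpace Z] [Nonempty Z] [Nonempty A] {k : ℕ}
    (f : Z → A → Measure Z) (hf : ∀ z a, IsProbabilityMeasure (f z a))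
    (g : Z → EuclideanSpace ℝ (Fin k)) (hgbdd : ∃ C, ∀ z, ‖g z‖ ≤ C)
    (γ : ℝ) (hγ0 : 0 ≤ γ) (hγ1 : γ < 1)
    (c₁ c₂ : Z) (V₁ V₂ : Z → ℝ)
    (hV₁meas : Measurable V₁) (hV₁bdd : ∃ C, ∀ z, |V₁ z| ≤ C)
    (hV₂meas : Measurable V₂) (hV₂bdd : ∃ C, ∀ z, |V₂ z| ≤ C)
    (hfix₁ : ∀ z, V₁ z
      = (1 - γ) * (-‖g z - g c₁‖)
        + γ * min (-‖g z - g c₁‖) (⨆ a : A, ∫ z', V₁ z' ∂(f z a)))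
    (hfix₂ : ∀ z, V₂ z
      = (1 - γ) * (-‖g z - g c₂‖)
        + γ * min (-‖g z - g c₂‖) (⨆ a : A, ∫ z', V₂ z' ∂(f z a))) :
    (⨆ z : Z, |V₁ z - V₂ z|) ≤ ‖g c₁ - g c₂‖ := by
  obtain ⟨C₁, hC₁⟩ := hV₁bdd
  obtain ⟨C₂, hC₂⟩ := hV₂bdd
  set ε := ‖g c₁ - g c₂‖ with hε
  have hε0 : 0 ≤ ε := norm_nonneg _
  have hDbdd : BddAbove (Set.range fun z => |V₁ z - V₂ z|) := by
    refine ⟨C₁ + C₂, ?_⟩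
    rintro _ ⟨z, rfl⟩
    have := abs_sub (V₁ z) (V₂ z)
    calc |V₁ z - V₂ z| ≤ |V₁ z| + |V₂ z| := abs_sub _ _
      _ ≤ C₁ + C₂ := add_le_add (hC₁ z) (hC₂ z)
  set D := ⨆ z : Z, |V₁ z - V₂ z| with hDdef
  -- integrability
  have hint₁ : ∀ z a, Integrable V₁ (f z a) := by
    intro z a
    haveI := hf z a
    exact (integrable_const C₁).mono' hV₁meas.aestronglyMeasurable
      (Filter.Eventually.of_forall fun z' => by simpa [Real.norm_eq_abs] using hC₁ z')
  have hint₂ : ∀ z a, Integrable V₂ (f z a) := by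
    intro z a
    haveI := hf z a
    exact (integrable_const C₂).mono' hV₂meas.aestronglyMeasurable
      (Filter.Eventually.of_forall fun z' => by simpa [Real.norm_eq_abs] using hC₂ z')
  have key : ∀ z a, |(∫ z', V₁ z' ∂(f z a)) - ∫ z', V₂ z' ∂(f z a)| ≤ D := by
    intro z a
    haveI := hf z a
    rw [← integral_sub (hint₁ z a) (hint₂ z a)]
    have h := norm_integral_le_of_norm_le_const (μ := f z a)
      (f := fun z' => V₁ z' - V₂ z') (C := D)
      (Filter.Eventually.of_forall fun z' => by
        simpa [Real.norm_eq_abs] using le_ciSup hDbdd z')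
    simpa [Real.norm_eq_abs, measure_univ] using h
  have hB₁ : ∀ z, BddAbove (Set.range fun a : A => ∫ z', V₁ z' ∂(f z a)) := by
    intro z
    refine ⟨C₁, ?_⟩
    rintro _ ⟨a, rfl⟩
    haveI := hf z a
    have h := norm_integral_le_of_norm_le_const (μ := f z a) (f := V₁) (C := C₁)
      (Filter.Eventually.of_forall fun z' => by simpa [Real.norm_eq_abs] using hC₁ z')
    simp only [Real.norm_eq_abs, measure_univ, ENNReal.toReal_one, probReal_univ, mul_one] at h
    exact (le_abs_self _).trans h
  have hB₂ : ∀ z, BddAbove (Set.range fun a : A => ∫ z', V₂ z' ∂(f z a)) := by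
    intro z
    refine ⟨C₂, ?_⟩
    rintro _ ⟨a, rfl⟩
    haveI := hf z a
    have h := norm_integral_le_of_norm_le_const (μ := f z a) (f := V₂) (C := C₂)
      (Filter.Eventually.of_forall fun z' => by simpa [Real.norm_eq_abs] using hC₂ z')
    simp only [Real.norm_eq_abs, measure_univ, ENNReal.toReal_one, probReal_univ, mul_one] at h
    exact (le_abs_self _).trans h
  have hS : ∀ z, |(⨆ a : A, ∫ z', V₁ z' ∂(f z a)) - ⨆ a : A, ∫ z', V₂ z' ∂(f z a)| ≤ D := by
    intro z
    rw [abs_sub_le_iff]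
    constructor
    · rw [sub_le_iff_le_add]
      refine ciSup_le fun a => ?_
      have h1 := (abs_le.mp (key z a)).2
      have h2 := le_ciSup (hB₂ z) a
      linarith
    · rw [sub_le_iff_le_add]
      refine ciSup_le fun a => ?_
      have h1 := (abs_le.mp (key z a)).1
      have h2 := le_ciSup (hB₁ z) a
      linarith
  have hpoint : ∀ z, |V₁ z - V₂ z| ≤ (1 - γ) * ε + γ * max ε D := by
    intro z
    have hℓ : |(-‖g z - g c₁‖) - (-‖g z - g c₂‖)| ≤ ε := by
      have h1 : |‖g z - g c₁‖ - ‖g z - g c₂‖| ≤ ‖(g z - g c₁) - (g z - g c₂)‖ :=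
        abs_norm_sub_norm_le _ _
      have h2 : (g z - g c₁) - (g z - g c₂) = g c₂ - g c₁ := by abel
      rw [h2, norm_sub_rev (g c₂) (g c₁)] at h1
      rw [show (-‖g z - g c₁‖) - (-‖g z - g c₂‖)
          = -(‖g z - g c₁‖ - ‖g z - g c₂‖) by ring, abs_neg]
      exact h1
    have hmin := (abs_min_sub_min' (-‖g z - g c₁‖) (⨆ a : A, ∫ z', V₁ z' ∂(f z a))
      (-‖g z - g c₂‖) (⨆ a : A, ∫ z', V₂ z' ∂(f z a))).trans (max_le_max hℓ (hS z))
    rw [hfix₁ z, hfix₂ z]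
    have e : ((1 - γ) * (-‖g z - g c₁‖)
        + γ * min (-‖g z - g c₁‖) (⨆ a : A, ∫ z', V₁ z' ∂(f z a)))
        - ((1 - γ) * (-‖g z - g c₂‖)
        + γ * min (-‖g z - g c₂‖) (⨆ a : A, ∫ z', V₂ z' ∂(f z a)))
        = (1 - γ) * ((-‖g z - g c₁‖) - (-‖g z - g c₂‖))
          + γ * (min (-‖g z - g c₁‖) (⨆ a : A, ∫ z', V₁ z' ∂(f z a))
            - min (-‖g z - g c₂‖) (⨆ a : A, ∫ z', V₂ z' ∂(f z a))) := by ring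
    rw [e]
    calc |_| ≤ |(1 - γ) * ((-‖g z - g c₁‖) - (-‖g z - g c₂‖))|
        + |γ * (min (-‖g z - g c₁‖) (⨆ a : A, ∫ z', V₁ z' ∂(f z a))
          - min (-‖g z - g c₂‖) (⨆ a : A, ∫ z', V₂ z' ∂(f z a)))| := abs_add_le _ _
      _ = (1 - γ) * |(-‖g z - g c₁‖) - (-‖g z - g c₂‖)|
          + γ * |min (-‖g z - g c₁‖) (⨆ a : A, ∫ z', V₁ z' ∂(f z a))
            - min (-‖g z - g c₂‖) (⨆ a : A, ∫ z', V₂ z' ∂(f z a))| := by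
          rw [abs_mul, abs_mul, abs_of_nonneg (by linarith : (0:ℝ) ≤ 1 - γ),
            abs_of_nonneg hγ0]
      _ ≤ (1 - γ) * ε + γ * max ε D :=
          add_le_add (mul_le_mul_of_nonneg_left hℓ (by linarith))
            (mul_le_mul_of_nonneg_left hmin hγ0)
  have hDle : D ≤ (1 - γ) * ε + γ * max ε D := ciSup_le hpoint
  rcases max_cases ε D with ⟨he, _⟩ | ⟨he, _⟩
  · rw [he] at hDle; nlinarith
  · rw [he] at hDle; nlinarith
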